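/- Let N ≥ 1, κ > 0, ε ∈ [0,1), θ ∈ [0, 1−ε), and W ≥ 0. Let (Q_k)_{k≥0} be invertible N×N real matrices with ‖Q_k^{−1}‖ ≤ 1/(κ(1−ε)) for all k, let (E_k)_{k≥0} be N×N real matrices with ‖E_k‖ ≤ κθ for all k, and let (w_k)_{k≥0} ⊂ ℝ^N satisfy ‖w_k‖₂ ≤ W for all k. Define v_0 = Q_0^{−1}w_0 and v_k = Q_k^{−1}(w_k − E_{k−1}v_{k−1}) for k ≥ 1. Then ‖v_k‖₂ ≤ W/(κ(1−ε−θ)) for all k ≥ 0; more precisely, ‖v_k‖₂ ≤ (Σ_{ℓ=0}^{k} θ^ℓ/(κ(1−ε)^{ℓ+1}))·W. -/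

import Mathlib

open Matrix

/-- Euclidean (ℓ²) norm of a vector in ℝ^n. -/
noncomputable def vecNorm {n : Type*} [Fintype n] (v : n → ℝ) : ℝ :=
  Real.sqrt (∑ i, v i ^ 2)

/-- Spectral norm (largest singular value) of a real matrix, defined as the operator
norm: the supremum of `‖A x‖₂` over unit vectors `x`. -/
noncomputable def matrixSpectralNorm {m n : Type*} [Fintype m] [Fintype n]
    (A : Matrix m n ℝ) : ℝ :=
  sSup ((fun x => vecNorm (A.mulVec x)) '' {x | vecNorm x = 1})

lemma vecNorm_eq_norm {n : Type*} [Fintype n] (v : n → ℝ) :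
    vecNorm v = ‖(WithLp.equiv 2 (n → ℝ)).symm v‖ := by
  simp [vecNorm, EuclideanSpace.norm_eq, sq_abs]

lemma vecNorm_nonneg {n : Type*} [Fintype n] (v : n → ℝ) : 0 ≤ vecNorm v :=
  Real.sqrt_nonneg _

lemma vecNorm_smul {n : Type*} [Fintype n] (c : ℝ) (v : n → ℝ) :
    vecNorm (c • v) = |c| * vecNorm v := by
  rw [vecNorm_eq_norm, vecNorm_eq_norm]
  have : (WithLp.equiv 2 (n → ℝ)).symm (c • v) = c • (WithLp.equiv 2 (n → ℝ)).symm v := rfl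
  rw [this, norm_smul, Real.norm_eq_abs]

lemma vecNorm_eq_zero {n : Type*} [Fintype n] {v : n → ℝ} (h : vecNorm v = 0) : v = 0 := by
  rw [vecNorm_eq_norm, norm_eq_zero] at h
  simpa using congrArg (WithLp.equiv 2 (n → ℝ)) h

noncomputable def mulVecCLM {m n : Type*} [Fintype m] [Fintype n] (A : Matrix m n ℝ) :
    EuclideanSpace ℝ n →L[ℝ] EuclideanSpace ℝ m :=
  LinearMap.toContinuousLinearMap
    ((WithLp.linearEquiv 2 ℝ (m → ℝ)).symm.toLinearMap ∘ₗ A.mulVecLin ∘ₗ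
      (WithLp.linearEquiv 2 ℝ (n → ℝ)).toLinearMap)

lemma mulVecCLM_apply {m n : Type*} [Fintype m] [Fintype n] (A : Matrix m n ℝ)
    (x : n → ℝ) :
    mulVecCLM A ((WithLp.equiv 2 (n → ℝ)).symm x) = (WithLp.equiv 2 (m → ℝ)).symm (A.mulVec x) :=
  rfl

lemma spectralNorm_mulVec_le {m n : Type*} [Fintype m] [Fintype n] [Nonempty n]
    (A : Matrix m n ℝ) (x : n → ℝ) :
    vecNorm (A.mulVec x) ≤ matrixSpectralNorm A * vecNorm x := by
  have hbdd : BddAbove ((fun x => vecNorm (A.mulVec x)) '' {x | vecNorm x = 1}) := by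
    refine ⟨‖mulVecCLM A‖, ?_⟩
    rintro y ⟨u, hu, rfl⟩
    have := (mulVecCLM A).le_opNorm ((WithLp.equiv 2 (n → ℝ)).symm u)
    rw [mulVecCLM_apply, ← vecNorm_eq_norm, ← vecNorm_eq_norm] at this
    simpa [Set.mem_setOf_eq.mp hu] using this
  rcases eq_or_ne (vecNorm x) 0 with h0 | h0
  · rw [vecNorm_eq_zero h0]
    simp [Matrix.mulVec_zero, vecNorm]
  · have hpos : 0 < vecNorm x := lt_of_le_of_ne (vecNorm_nonneg x) (Ne.symm h0)
    set u := (vecNorm x)⁻¹ • x with hu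
    have hun : vecNorm u = 1 := by
      rw [hu, vecNorm_smul, abs_of_pos (inv_pos.mpr hpos), inv_mul_cancel₀ h0]
    have hmem : vecNorm (A.mulVec u) ∈ (fun x => vecNorm (A.mulVec x)) '' {x | vecNorm x = 1} :=
      ⟨u, hun, rfl⟩
    have hle : vecNorm (A.mulVec u) ≤ matrixSpectralNorm A := le_csSup hbdd hmem
    have : A.mulVec u = (vecNorm x)⁻¹ • A.mulVec x := by
      rw [hu, Matrix.mulVec_smul]
    rw [this, vecNorm_smul, abs_of_pos (inv_pos.mpr hpos)] at hle
    calc vecNorm (A.mulVec x) = ((vecNorm x)⁻¹ * vecNorm (A.mulVec x)) * vecNorm x := by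
          field_simp
      _ ≤ matrixSpectralNorm A * vecNorm x := by
          exact mul_le_mul_of_nonneg_right hle hpos.le

lemma vecNorm_sub_le {n : Type*} [Fintype n] (a b : n → ℝ) :
    vecNorm (a - b) ≤ vecNorm a + vecNorm b := by
  rw [vecNorm_eq_norm, vecNorm_eq_norm, vecNorm_eq_norm]
  have : (WithLp.equiv 2 (n → ℝ)).symm (a - b)
      = (WithLp.equiv 2 (n → ℝ)).symm a - (WithLp.equiv 2 (n → ℝ)).symm b := rfl
  rw [this]
  exact norm_sub_le _ _


/-- uniform bound on the forward-sweep vectors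
`v₀ = Q₀⁻¹ w₀`, `v_k = Q_k⁻¹ (w_k − E_{k−1} v_{k−1})`. -/
theorem forward_sweep_bound (N : ℕ) (hN : 1 ≤ N) (κ ε θ W : ℝ)
    (hκ : 0 < κ) (hε0 : 0 ≤ ε) (hε1 : ε < 1) (hθ0 : 0 ≤ θ) (hθ : θ < 1 - ε) (hW : 0 ≤ W)
    (Q E : ℕ → Matrix (Fin N) (Fin N) ℝ)
    (hQunit : ∀ k, IsUnit (Q k))
    (hQinv : ∀ k, matrixSpectralNorm (Q k)⁻¹ ≤ 1 / (κ * (1 - ε)))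
    (hE : ∀ k, matrixSpectralNorm (E k) ≤ κ * θ)
    (w : ℕ → Fin N → ℝ) (hw : ∀ k, vecNorm (w k) ≤ W)
    (v : ℕ → Fin N → ℝ)
    (hv0 : v 0 = (Q 0)⁻¹.mulVec (w 0))
    (hvS : ∀ k, v (k + 1) = (Q (k + 1))⁻¹.mulVec (w (k + 1) - (E k).mulVec (v k))) :
    ∀ k, vecNorm (v k) ≤ W / (κ * (1 - ε - θ)) ∧
      vecNorm (v k) ≤ (∑ l ∈ Finset.range (k + 1), θ ^ l / (κ * (1 - ε) ^ (l + 1))) * W := by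
  haveI : Nonempty (Fin N) := ⟨⟨0, hN⟩⟩
  have hεp : (0:ℝ) < 1 - ε := by linarith
  have hεθ : (0:ℝ) < 1 - ε - θ := by linarith
  set S : ℕ → ℝ := fun k => ∑ l ∈ Finset.range (k + 1), θ ^ l / (κ * (1 - ε) ^ (l + 1)) with hS
  have hbase : (0:ℝ) < 1 / (κ * (1 - ε)) := by positivity
  have hSnn : ∀ k, 0 ≤ S k := by
    intro k
    apply Finset.sum_nonneg
    intro l _
    positivity
  have hSrec : ∀ k, S (k + 1) = θ / (1 - ε) * S k + 1 / (κ * (1 - ε)) := by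
    intro k
    rw [hS]
    simp only
    rw [Finset.sum_range_succ' (fun l => θ ^ l / (κ * (1 - ε) ^ (l + 1))) (k + 1),
      Finset.mul_sum]
    congr 1
    · apply Finset.sum_congr rfl
      intro l _
      field_simp
      ring
    · field_simp
      ring
  -- main induction
  have hmain : ∀ k, vecNorm (v k) ≤ S k * W := by
    intro k
    induction k with
    | zero =>
      rw [hv0]
      calc vecNorm ((Q 0)⁻¹.mulVec (w 0)) ≤ matrixSpectralNorm (Q 0)⁻¹ * vecNorm (w 0) :=
            spectralNorm_mulVec_le _ _
        _ ≤ (1 / (κ * (1 - ε))) * W :=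
            mul_le_mul (hQinv 0) (hw 0) (vecNorm_nonneg _) hbase.le
        _ = S 0 * W := by simp [hS]
    | succ k ih =>
      have hEv : vecNorm ((E k).mulVec (v k)) ≤ κ * θ * (S k * W) :=
        le_trans (spectralNorm_mulVec_le _ _)
          (mul_le_mul (hE k) ih (vecNorm_nonneg _) (by positivity))
      have hsub : vecNorm (w (k + 1) - (E k).mulVec (v k)) ≤ W + κ * θ * (S k * W) :=
        le_trans (vecNorm_sub_le _ _) (add_le_add (hw (k + 1)) hEv)
      calc vecNorm (v (k + 1))
          = vecNorm ((Q (k + 1))⁻¹.mulVec (w (k + 1) - (E k).mulVec (v k))) := by rw [hvS]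
        _ ≤ matrixSpectralNorm (Q (k + 1))⁻¹ * vecNorm (w (k + 1) - (E k).mulVec (v k)) :=
            spectralNorm_mulVec_le _ _
        _ ≤ (1 / (κ * (1 - ε))) * (W + κ * θ * (S k * W)) :=
            mul_le_mul (hQinv _) hsub (vecNorm_nonneg _) hbase.le
        _ = S (k + 1) * W := by
            rw [hSrec k]
            field_simp
            ring
  intro k
  refine ⟨?_, hmain k⟩
  -- geometric bound on S k
  have hr0 : (0:ℝ) ≤ θ / (1 - ε) := by positivity
  have hr1 : θ / (1 - ε) < 1 := by
    rw [div_lt_one hεp]; linarith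
  have hgeo : ∑ l ∈ Finset.range (k + 1), (θ / (1 - ε)) ^ l ≤ (1 - θ / (1 - ε))⁻¹ := by
    have hsum := tsum_geometric_of_lt_one hr0 hr1
    calc ∑ l ∈ Finset.range (k + 1), (θ / (1 - ε)) ^ l
        ≤ ∑' l : ℕ, (θ / (1 - ε)) ^ l :=
          Summable.sum_le_tsum _ (fun i _ => pow_nonneg hr0 i) (summable_geometric_of_lt_one hr0 hr1)
      _ = (1 - θ / (1 - ε))⁻¹ := hsum
  have hSk : S k ≤ 1 / (κ * (1 - ε - θ)) := by
    have heq : S k = (1 / (κ * (1 - ε))) * ∑ l ∈ Finset.range (k + 1), (θ / (1 - ε)) ^ l := by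
      rw [hS, Finset.mul_sum]
      apply Finset.sum_congr rfl
      intro l _
      rw [div_pow, pow_succ]
      have h1 : (1 - ε) ≠ 0 := hεp.ne'
      field_simp
    rw [heq]
    have h2 : (1 / (κ * (1 - ε))) * (1 - θ / (1 - ε))⁻¹ = 1 / (κ * (1 - ε - θ)) := by
      rw [eq_div_iff (by positivity)]
      field_simp
    calc (1 / (κ * (1 - ε))) * ∑ l ∈ Finset.range (k + 1), (θ / (1 - ε)) ^ l
        ≤ (1 / (κ * (1 - ε))) * (1 - θ / (1 - ε))⁻¹ :=
          mul_le_mul_of_nonneg_left hgeo hbase.le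
      _ = 1 / (κ * (1 - ε - θ)) := h2
  calc vecNorm (v k) ≤ S k * W := hmain k
    _ ≤ (1 / (κ * (1 - ε - θ))) * W := mul_le_mul_of_nonneg_right hSk hW
    _ = W / (κ * (1 - ε - θ)) := by ring
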